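/- arXiv:1903.10636 — 5 statements merged into one kernel-verified Lean document; each statement's English description precedes it below -/
import Mathlib

section
/- Let B be a finite family of pairwise distinct nonempty subsets of an m-element set, and let N be a natural number with Σ_{b ∈ B} |b| ≤ N. Let i_max = max{k ∈ ℕ : Σ_{i=1}^{k} i·C(m,i) ≤ N}. Then |B| ≤ Σ_{i=1}^{i_max} C(m,i) + ⌊(N − Σ_{i=1}^{i_max} i·C(m,i))/(i_max + 1)⌋. -/
/-- `i_max = max {k : Σ_{i=1}^k i·C(m,i) ≤ N}`.  Since `C(m,i) = 0` for `i > m`,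
the partial sums are constant beyond `k = m`, so the maximum is realized within
`{0, …, m}` and may be computed by `Nat.findGreatest` with bound `m`. -/
def imax (m N : ℕ) : ℕ :=
  Nat.findGreatest (fun k => ∑ i ∈ Finset.Icc 1 k, i * m.choose i ≤ N) m

/-- The counting bound
`Σ_{i=1}^{i_max} C(m,i) + ⌊(N − Σ_{i=1}^{i_max} i·C(m,i)) / (i_max + 1)⌋`
(natural subtraction and division, which agree with the intended values since
`Σ_{i=1}^{i_max} i·C(m,i) ≤ N` by definition of `i_max`). -/
def boundFormula (m N : ℕ) : ℕ :=
  (∑ i ∈ Finset.Icc 1 (imax m N), m.choose i) +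
    (N - ∑ i ∈ Finset.Icc 1 (imax m N), i * m.choose i) / (imax m N + 1)

/-- Any family `B` of pairwise distinct nonempty subsets of an `m`-element set with
total size `Σ_{b ∈ B} |b| ≤ N` satisfies
`|B| ≤ Σ_{i=1}^{i_max} C(m,i) + ⌊(N − Σ_{i=1}^{i_max} i·C(m,i))/(i_max + 1)⌋`. -/
theorem card_le_boundFormula {m N : ℕ} (B : Finset (Finset (Fin m)))
    (hne : ∀ b ∈ B, b ≠ ∅) (hN : ∑ b ∈ B, b.card ≤ N) :
    B.card ≤ boundFormula m N := by
  set t := imax m N with ht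
  set A := ∑ i ∈ Finset.Icc 1 t, m.choose i with hA
  set S := ∑ i ∈ Finset.Icc 1 t, i * m.choose i with hSdef
  -- S ≤ N by definition of findGreatest
  have hS : S ≤ N := by
    have h0 := Nat.findGreatest_spec
      (P := fun k => ∑ i ∈ Finset.Icc 1 k, i * m.choose i ≤ N)
      (Nat.zero_le m) (by simp)
    simpa [hSdef, ht, imax] using h0
  -- restrict to small sets
  have hfilsum : ∑ b ∈ B.filter (fun b => b.card ≤ t), (t + 1 - b.card)
      = ∑ b ∈ B, (t + 1 - b.card) := by
    refine Finset.sum_filter_of_ne ?_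
    intro b _ hb0
    omega
  have hfil : ∀ b ∈ B.filter (fun b => b.card ≤ t), b.card ∈ Finset.Icc 1 t := by
    intro b hb
    simp only [Finset.mem_filter] at hb
    have hb0 : b.card ≠ 0 := by
      simpa [Finset.card_eq_zero] using hne b hb.1
    exact Finset.mem_Icc.2 ⟨Nat.one_le_iff_ne_zero.2 hb0, hb.2⟩
  have hfib : ∑ b ∈ B.filter (fun b => b.card ≤ t), (t + 1 - b.card)
      = ∑ i ∈ Finset.Icc 1 t, ∑ b ∈ (B.filter (fun b => b.card ≤ t)).filter
          (fun b => b.card = i), (t + 1 - b.card) :=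
    (Finset.sum_fiberwise_of_maps_to hfil _).symm
  have hinner : ∀ i ∈ Finset.Icc 1 t,
      ∑ b ∈ (B.filter (fun b => b.card ≤ t)).filter (fun b => b.card = i),
        (t + 1 - b.card) ≤ (t + 1 - i) * m.choose i := by
    intro i _
    have hsub : (B.filter (fun b => b.card ≤ t)).filter (fun b => b.card = i)
        ⊆ Finset.univ.powersetCard i := by
      intro b hb
      simp only [Finset.mem_filter] at hb
      exact Finset.mem_powersetCard_univ.2 hb.2
    have hcard : ((B.filter (fun b => b.card ≤ t)).filter
        (fun b => b.card = i)).card ≤ m.choose i := by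
      have := Finset.card_le_card hsub
      simpa using this
    calc ∑ b ∈ (B.filter (fun b => b.card ≤ t)).filter (fun b => b.card = i),
          (t + 1 - b.card)
        = ∑ _b ∈ (B.filter (fun b => b.card ≤ t)).filter (fun b => b.card = i),
          (t + 1 - i) := by
          refine Finset.sum_congr rfl ?_
          intro b hb
          simp only [Finset.mem_filter] at hb
          rw [hb.2]
      _ = ((B.filter (fun b => b.card ≤ t)).filter (fun b => b.card = i)).card
            * (t + 1 - i) := by rw [Finset.sum_const, smul_eq_mul]
      _ ≤ m.choose i * (t + 1 - i) := Nat.mul_le_mul_right _ hcard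
      _ = (t + 1 - i) * m.choose i := Nat.mul_comm _ _
  have hsmall : ∑ b ∈ B, (t + 1 - b.card) ≤ ∑ i ∈ Finset.Icc 1 t,
      (t + 1 - i) * m.choose i := by
    rw [← hfilsum, hfib]
    exact Finset.sum_le_sum hinner
  have hid : ∑ i ∈ Finset.Icc 1 t, (t + 1 - i) * m.choose i + S = (t + 1) * A := by
    rw [hSdef, hA, Finset.mul_sum, ← Finset.sum_add_distrib]
    refine Finset.sum_congr rfl ?_
    intro i hi
    have hit : i ≤ t := (Finset.mem_Icc.1 hi).2
    rw [← Nat.add_mul]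
    congr 1
    omega
  -- key inequality
  have key : (t + 1) * B.card + S ≤ (t + 1) * A + N := by
    have h1 : (t + 1) * B.card ≤ ∑ b ∈ B, (t + 1 - b.card) + ∑ b ∈ B, b.card := by
      rw [← Finset.sum_add_distrib]
      calc (t + 1) * B.card = ∑ _b ∈ B, (t + 1) := by
            rw [Finset.sum_const, smul_eq_mul, Nat.mul_comm]
        _ ≤ ∑ b ∈ B, (t + 1 - b.card + b.card) :=
            Finset.sum_le_sum (fun b _ => by omega)
    calc (t + 1) * B.card + S
        ≤ (∑ b ∈ B, (t + 1 - b.card) + ∑ b ∈ B, b.card) + S :=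
          Nat.add_le_add_right h1 S
      _ ≤ (∑ i ∈ Finset.Icc 1 t, (t + 1 - i) * m.choose i + N) + S := by
          have := Nat.add_le_add hsmall hN
          omega
      _ = (∑ i ∈ Finset.Icc 1 t, (t + 1 - i) * m.choose i + S) + N := by omega
      _ = (t + 1) * A + N := by rw [hid]
  -- conclude
  have hgoal : boundFormula m N = A + (N - S) / (t + 1) := by
    rw [boundFormula, ← ht, ← hA, ← hSdef]
  rw [hgoal]
  rcases le_or_gt B.card A with h | h
  · exact le_trans h (Nat.le_add_right _ _)
  · have hd : B.card = A + (B.card - A) := by omega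
    have h2 : (t + 1) * (B.card - A) ≤ N - S := by
      rw [hd, Nat.mul_add] at key
      have := Nat.le_of_add_le_add_left (a := (t + 1) * A)
        (by omega : (t + 1) * A + ((t + 1) * (B.card - A) + S) ≤ (t + 1) * A + N)
      omega
    have h3 : B.card - A ≤ (N - S) / (t + 1) :=
      (Nat.le_div_iff_mul_le (Nat.succ_pos t)).2 (by rw [Nat.mul_comm]; exact h2)
    omega
end

section
/- Let V be a finite set of n nodes and P = (p_1, …, p_m), m > 1, arbitrary monitoring paths where p_i ⊆ V has cardinality d_i. Set N_max = min{Σ_{i=1}^{m} d_i, m·2^{m−1}} (note Σ d_i = m·d̄ where d̄ is the average path length) and i_max = max{k ∈ ℕ : Σ_{i=1}^{k} i·C(m,i) ≤ N_max}. Then the number of identifiable nodes is at most min{Σ_{i=1}^{i_max} C(m,i) + ⌊(N_max − Σ_{i=1}^{i_max} i·C(m,i))/(i_max + 1)⌋, n}. -/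
/-- The encoding of a node `v` w.r.t. monitoring paths `p`. -/
def encoding {V : Type*} [DecidableEq V] {m : ℕ} (p : Fin m → Finset V) (v : V) :
    Finset (Fin m) :=
  Finset.univ.filter fun i => v ∈ p i

/-- A node is identifiable iff its encoding is nonempty and distinct from the
encoding of every other node. -/
def Identifiable {V : Type*} [DecidableEq V] {m : ℕ} (p : Fin m → Finset V) (v : V) :
    Prop :=
  encoding p v ≠ ∅ ∧ ∀ w : V, w ≠ v → encoding p w ≠ encoding p v

/-- The number of subsets of `Fin m` containing a fixed element is `2^(m-1)`. -/
lemma aux_card_filter_mem (m : ℕ) (x : Fin m) :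
    ((Finset.univ : Finset (Finset (Fin m))).filter (fun A => x ∈ A)).card = 2 ^ (m - 1) := by
  classical
  rw [show 2 ^ (m-1) = ((Finset.univ.erase x).powerset).card by
    rw [Finset.card_powerset, Finset.card_erase_of_mem (Finset.mem_univ x), Finset.card_univ,
      Fintype.card_fin]]
  refine Finset.card_bij' (fun A _ => A.erase x) (fun B _ => insert x B) ?_ ?_ ?_ ?_
  · intro A hA
    simp only [Finset.mem_powerset]
    intro y hy
    simp only [Finset.mem_erase] at hy ⊢
    exact ⟨hy.1, Finset.mem_univ y⟩
  · intro B hB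
    simp
  · intro A hA
    simp only [Finset.mem_filter] at hA
    exact Finset.insert_erase hA.2
  · intro B hB
    simp only [Finset.mem_powerset] at hB
    exact Finset.erase_insert (fun hx => (Finset.mem_erase.mp (hB hx)).1 rfl)

/-- Sum of the sizes of all subsets of `Fin m` is `m·2^(m-1)`. -/
lemma aux_sum_card_univ (m : ℕ) :
    ∑ A : Finset (Fin m), A.card = m * 2 ^ (m - 1) := by
  classical
  have h1 : ∀ A : Finset (Fin m), A.card = ∑ x : Fin m, if x ∈ A then 1 else 0 := by
    intro A
    rw [Finset.sum_ite_mem, Finset.univ_inter, Finset.sum_const, smul_eq_mul, mul_one]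
  calc ∑ A : Finset (Fin m), A.card = ∑ A : Finset (Fin m), ∑ x : Fin m, if x ∈ A then 1 else 0 :=
        Finset.sum_congr rfl (fun A _ => h1 A)
    _ = ∑ x : Fin m, ∑ A : Finset (Fin m), if x ∈ A then 1 else 0 := Finset.sum_comm
    _ = ∑ x : Fin m, ((Finset.univ : Finset (Finset (Fin m))).filter (fun A => x ∈ A)).card := by
        apply Finset.sum_congr rfl; intro x _; rw [Finset.card_filter]
    _ = ∑ _x : Fin m, 2 ^ (m - 1) := Finset.sum_congr rfl (fun x _ => aux_card_filter_mem m x)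
    _ = m * 2 ^ (m - 1) := by simp [mul_comm]

/-- Key counting lemma: any family of distinct nonempty subsets of `Fin m` with total
size at most `N` has cardinality at most `boundFormula m N`. -/
lemma key_count (m N : ℕ) (T : Finset (Finset (Fin m))) (h0 : ∅ ∉ T)
    (hN : ∑ A ∈ T, A.card ≤ N) : T.card ≤ boundFormula m N := by
  classical
  set j := imax m N with hj
  set S1 := ∑ i ∈ Finset.Icc 1 j, m.choose i with hS1
  set S2 := ∑ i ∈ Finset.Icc 1 j, i * m.choose i with hS2
  have hbf : boundFormula m N = S1 + (N - S2) / (j + 1) := rfl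
  have hjN : S2 ≤ N := by
    have := Nat.findGreatest_spec (P := fun k => ∑ i ∈ Finset.Icc 1 k, i * m.choose i ≤ N)
      (Nat.zero_le m) (by simp)
    exact this
  -- Step A : sum of deficits is bounded
  have hA : ∑ A ∈ T, (j + 1 - A.card) ≤ ∑ i ∈ Finset.Icc 1 j, (j + 1 - i) * m.choose i := by
    have hsplit : ∑ A ∈ T, (j + 1 - A.card)
        = ∑ A ∈ T.filter (fun A => A.card ≤ j), (j + 1 - A.card) := by
      rw [← Finset.sum_filter_add_sum_filter_not T (fun A => A.card ≤ j)]
      have hz : ∑ A ∈ T.filter (fun A => ¬ A.card ≤ j), (j + 1 - A.card) = 0 :=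
        Finset.sum_eq_zero fun A hA => by
          have := (Finset.mem_filter.mp hA).2; omega
      omega
    rw [hsplit]
    rw [← Finset.sum_fiberwise_of_maps_to (g := Finset.card) (t := Finset.Icc 1 j)
      (fun A hA => by
        have hAT := (Finset.mem_filter.mp hA).1
        have h1 : A ≠ ∅ := fun h => h0 (h ▸ hAT)
        have : 1 ≤ A.card := Finset.card_pos.mpr (Finset.nonempty_iff_ne_empty.mpr h1)
        exact Finset.mem_Icc.mpr ⟨this, (Finset.mem_filter.mp hA).2⟩)
      (fun A => j + 1 - A.card)]
    apply Finset.sum_le_sum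
    intro i hi
    have hconst : ∑ A ∈ (T.filter (fun A => A.card ≤ j)).filter (fun A => A.card = i),
        (j + 1 - A.card)
        = ((T.filter (fun A => A.card ≤ j)).filter (fun A => A.card = i)).card * (j + 1 - i) := by
      rw [Finset.sum_congr rfl (fun A hA => by
        rw [(Finset.mem_filter.mp hA).2]), Finset.sum_const, smul_eq_mul]
    rw [hconst, mul_comm]
    apply Nat.mul_le_mul_left
    calc ((T.filter (fun A => A.card ≤ j)).filter (fun A => A.card = i)).card
        ≤ (Finset.powersetCard i (Finset.univ : Finset (Fin m))).card := by
          apply Finset.card_le_card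
          intro A hA
          rw [Finset.mem_powersetCard]
          exact ⟨Finset.subset_univ A, (Finset.mem_filter.mp hA).2⟩
      _ = m.choose i := by rw [Finset.card_powersetCard, Finset.card_univ, Fintype.card_fin]
  -- Step B
  have hB : (j + 1) * T.card ≤ N + ∑ i ∈ Finset.Icc 1 j, (j + 1 - i) * m.choose i := by
    have hconst : (j + 1) * T.card = ∑ _A ∈ T, (j + 1) := by
      rw [Finset.sum_const, smul_eq_mul, mul_comm]
    rw [hconst]
    calc ∑ _A ∈ T, (j + 1) ≤ ∑ A ∈ T, (A.card + (j + 1 - A.card)) :=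
          Finset.sum_le_sum (fun A _ => by omega)
      _ = ∑ A ∈ T, A.card + ∑ A ∈ T, (j + 1 - A.card) := Finset.sum_add_distrib
      _ ≤ N + ∑ i ∈ Finset.Icc 1 j, (j + 1 - i) * m.choose i := add_le_add hN hA
  -- Step C
  have hC : ∑ i ∈ Finset.Icc 1 j, (j + 1 - i) * m.choose i + S2 = (j + 1) * S1 := by
    rw [hS2, hS1, ← Finset.sum_add_distrib, Finset.mul_sum]
    apply Finset.sum_congr rfl
    intro i hi
    have h2 := (Finset.mem_Icc.mp hi).2
    rw [← add_mul]
    congr 1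
    omega
  have hkey : (j + 1) * T.card + S2 ≤ N + (j + 1) * S1 := by
    calc (j + 1) * T.card + S2
        ≤ (N + ∑ i ∈ Finset.Icc 1 j, (j + 1 - i) * m.choose i) + S2 := add_le_add_left hB _
      _ = N + (j + 1) * S1 := by rw [add_assoc, hC]
  by_cases hle : T.card ≤ S1
  · rw [hbf]; exact hle.trans (Nat.le_add_right _ _)
  · push_neg at hle
    set r := T.card - S1 with hrdef
    have hr : T.card = S1 + r := by omega
    have hlin : (j + 1) * r + S2 ≤ N := by
      have e : (j + 1) * T.card = (j + 1) * S1 + (j + 1) * r := by rw [hr, mul_add]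
      rw [e] at hkey
      have := Nat.le_of_add_le_add_left (a := (j + 1) * S1)
        (by linarith [hkey] : (j + 1) * S1 + ((j + 1) * r + S2) ≤ (j + 1) * S1 + N)
      exact this
    have hrle : r ≤ (N - S2) / (j + 1) := by
      rw [Nat.le_div_iff_mul_le (Nat.succ_pos j), mul_comm]
      exact Nat.le_sub_of_add_le hlin
    rw [hbf, hr]
    exact add_le_add_right hrle _

/-- Identifiability under arbitrary routing (Theorem IV.1): with `m > 1` arbitrary
monitoring paths on `n` nodes, setting `N_max = min (Σ_i d_i) (m·2^(m-1))`
(where `Σ_i d_i = m·d̄`), the number of identifiable nodes is at most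
`min (boundFormula m N_max) n`. -/
theorem identifiable_le_arbitrary_routing {V : Type*} [Fintype V] [DecidableEq V]
    {m : ℕ} (hm : 1 < m) (p : Fin m → Finset V) :
    {v : V | Identifiable p v}.ncard ≤
      min (boundFormula m (min (∑ i, (p i).card) (m * 2 ^ (m - 1))))
        (Fintype.card V) := by
  classical
  have hfin : {v : V | Identifiable p v}.Finite := Set.toFinite _
  set S := hfin.toFinset with hSdef
  have hcard : {v : V | Identifiable p v}.ncard = S.card := Set.ncard_eq_toFinset_card _ hfin
  have hmemS : ∀ v, v ∈ S ↔ Identifiable p v := by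
    intro v; rw [hSdef, Set.Finite.mem_toFinset]; rfl
  -- encoding is injective on S
  have hinj : Set.InjOn (encoding p) S := by
    intro a ha b hb hab
    by_contra hne
    exact ((hmemS b).mp hb).2 a hne hab
  set T := S.image (encoding p) with hTdef
  have hTcard : T.card = S.card := Finset.card_image_of_injOn hinj
  have h0 : ∅ ∉ T := by
    intro h
    obtain ⟨v, hv, hve⟩ := Finset.mem_image.mp h
    exact ((hmemS v).mp hv).1 hve
  have hTsum : ∑ A ∈ T, A.card = ∑ v ∈ S, (encoding p v).card := by
    rw [hTdef]
    exact Finset.sum_image (fun a ha b hb h => hinj ha hb h)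
  -- bound 1: total size of encodings is the total path length (double counting)
  have hbound1 : ∑ A ∈ T, A.card ≤ ∑ i, (p i).card := by
    rw [hTsum]
    calc ∑ v ∈ S, (encoding p v).card ≤ ∑ v : V, (encoding p v).card :=
          Finset.sum_le_sum_of_subset (Finset.subset_univ S)
      _ = ∑ i, (p i).card := by
          simp only [encoding, Finset.card_filter]
          rw [Finset.sum_comm]
          apply Finset.sum_congr rfl
          intro i _
          rw [← Finset.card_filter]
          congr 1
          exact Finset.filter_univ_mem (p i)
  -- bound 2: total size of a family of distinct subsets of `Fin m`
  have hbound2 : ∑ A ∈ T, A.card ≤ m * 2 ^ (m - 1) := by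
    calc ∑ A ∈ T, A.card ≤ ∑ A : Finset (Fin m), A.card :=
          Finset.sum_le_sum_of_subset (Finset.subset_univ T)
      _ = m * 2 ^ (m - 1) := aux_sum_card_univ m
  have hmain : T.card ≤ boundFormula m (min (∑ i, (p i).card) (m * 2 ^ (m - 1))) :=
    key_count _ _ _ h0 (le_min hbound1 hbound2)
  rw [hcard]
  exact le_min (hTcard ▸ hmain) (by simpa using Finset.card_le_univ S)
end

section
/- For every m ≥ 1 and every assignment of path lengths d_1, …, d_m ≥ 1 that are balanced (|d_i − d_j| ≤ 1 for all i, j) and satisfy N := Σ_{i=1}^{m} d_i ≤ m·2^{m−1}, there exist a finite set V and monitoring paths P = (p_1, …, p_m) with p_i ⊆ V and |p_i| = d_i such that the number of identifiable nodes equals Σ_{i=1}^{i_max} C(m,i) + ⌊(N − Σ_{i=1}^{i_max} i·C(m,i))/(i_max + 1)⌋, where i_max = max{k ∈ ℕ : Σ_{i=1}^{k} i·C(m,i) ≤ N}. In other words, the arbitrary-routing upper bound on identifiability is achieved tightly. -/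
open Finset

lemma col_sum {α : Type*} [Fintype α] [DecidableEq α] (E : Finset (Finset α)) :
    ∑ i : α, (E.filter (fun S => i ∈ S)).card = ∑ S ∈ E, S.card := by
  simp only [Finset.card_filter]
  rw [Finset.sum_comm]
  congr 1; ext S
  simp [Finset.card_filter]

lemma exists_uniform_family (m j Q : ℕ) (γ : Fin m → ℕ) (hQ : Q ≤ m.choose j)
    (hsum : ∑ i, γ i = Q * j) (hbal : ∀ a b, γ a ≤ γ b + 1) :
    ∃ E : Finset (Finset (Fin m)), E.card = Q ∧ (∀ S ∈ E, S.card = j) ∧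
      ∀ i, (E.filter (fun S => i ∈ S)).card = γ i := by
  classical
  set col : Finset (Finset (Fin m)) → Fin m → ℕ := fun E i => (E.filter (fun S => i ∈ S)).card with hcoldef
  let Φ : Finset (Finset (Fin m)) → ℕ := fun E => ∑ i, ((col E i : ℤ) - γ i).natAbs
  let 𝒮 : Finset (Finset (Finset (Fin m))) :=
    Finset.univ.filter (fun E => E.card = Q ∧ ∀ S ∈ E, S.card = j)
  have h𝒮ne : 𝒮.Nonempty := by
    obtain ⟨E₀, hE₀sub, hE₀card⟩ :=
      Finset.exists_subset_card_eq (show Q ≤ (Finset.univ.powersetCard j : Finset (Finset (Fin m))).card by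
        rw [Finset.card_powersetCard, Finset.card_univ, Fintype.card_fin]; exact hQ)
    refine ⟨E₀, ?_⟩
    simp only [𝒮, Finset.mem_filter, Finset.mem_univ, true_and]
    exact ⟨hE₀card, fun S hS => (Finset.mem_powersetCard.1 (hE₀sub hS)).2⟩
  obtain ⟨E, hE𝒮, hEmin⟩ := Finset.exists_min_image 𝒮 Φ h𝒮ne
  simp only [𝒮, Finset.mem_filter, Finset.mem_univ, true_and] at hE𝒮
  obtain ⟨hEcard, hEsizes⟩ := hE𝒮
  refine ⟨E, hEcard, hEsizes, ?_⟩
  -- sums of columns agree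
  have hsums : ∑ i, col E i = ∑ i, γ i := by
    rw [hsum, col_sum]
    rw [Finset.sum_congr rfl (fun S hS => hEsizes S hS), Finset.sum_const, hEcard, smul_eq_mul]
  by_contra hne
  push_neg at hne
  obtain ⟨i₀, hi₀⟩ := hne
  -- find a with col > γ and b with col < γ
  have ha : ∃ a, γ a < col E a := by
    by_contra h; push_neg at h
    have : ∑ i, col E i < ∑ i, γ i :=
      Finset.sum_lt_sum (fun i _ => h i) ⟨i₀, Finset.mem_univ _, lt_of_le_of_ne (h i₀) hi₀⟩
    omega
  obtain ⟨a, ha⟩ := ha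
  have hb : ∃ b, col E b < γ b := by
    by_contra h; push_neg at h
    have : ∑ i, γ i < ∑ i, col E i :=
      Finset.sum_lt_sum (fun i _ => h i) ⟨a, Finset.mem_univ _, ha⟩
    omega
  obtain ⟨b, hb⟩ := hb
  have hab : a ≠ b := by rintro rfl; omega
  -- counting classes
  set X := E.filter (fun S => a ∈ S ∧ b ∉ S) with hX
  set Y := E.filter (fun S => b ∈ S ∧ a ∉ S) with hY
  have hXcard : col E a = X.card + (E.filter (fun S => a ∈ S ∧ b ∈ S)).card := by
    show (E.filter (fun S => a ∈ S)).card = _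
    rw [← Finset.card_filter_add_card_filter_not (p := fun S => b ∈ S)
      (s := E.filter (fun S => a ∈ S))]
    simp only [Finset.filter_filter, hX]
    rw [Nat.add_comm]
  have hYcard : col E b = Y.card + (E.filter (fun S => a ∈ S ∧ b ∈ S)).card := by
    show (E.filter (fun S => b ∈ S)).card = _
    rw [← Finset.card_filter_add_card_filter_not (p := fun S => a ∈ S)
      (s := E.filter (fun S => b ∈ S))]
    simp only [Finset.filter_filter, hY]
    rw [Nat.add_comm]
    have hcomm : (E.filter (fun U => b ∈ U ∧ a ∈ U)) = (E.filter (fun S => a ∈ S ∧ b ∈ S)) := by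
      ext U
      simp only [Finset.mem_filter]
      tauto
    rw [hcomm]
  have hcolab : col E b < col E a := by
    have h1 := hbal b a
    omega
  have hXY : Y.card < X.card := by omega
  -- find a swappable set
  have hSex : ∃ S ∈ X, insert b (S.erase a) ∉ E := by
    by_contra h; push_neg at h
    have hinj : ∀ S ∈ X, ∀ S' ∈ X, insert b (S.erase a) = insert b (S'.erase a) → S = S' := by
      intro S hS S' hS' heq
      simp only [hX, Finset.mem_filter] at hS hS'
      have h1 : S.erase a = S'.erase a := by
        have hbS : b ∉ S.erase a := fun hc => hS.2.2 (Finset.mem_of_mem_erase hc)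
        have hbS' : b ∉ S'.erase a := fun hc => hS'.2.2 (Finset.mem_of_mem_erase hc)
        rw [← Finset.erase_insert hbS, ← Finset.erase_insert hbS', heq]
      rw [← Finset.insert_erase hS.2.1, ← Finset.insert_erase hS'.2.1, h1]
    have hmaps : ∀ S ∈ X, insert b (S.erase a) ∈ Y := by
      intro S hS
      simp only [hX, Finset.mem_filter] at hS
      simp only [hY, Finset.mem_filter]
      refine ⟨h S (by simp [hX, Finset.mem_filter]; tauto), Finset.mem_insert_self _ _, ?_⟩
      simp only [Finset.mem_insert, Finset.mem_erase]
      push_neg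
      exact ⟨hab, fun hc _ => hc rfl⟩
    have := Finset.card_le_card_of_injOn _ hmaps (fun S hS S' hS' => hinj S hS S' hS')
    omega
  obtain ⟨S, hSX, hTnotE⟩ := hSex
  simp only [hX, Finset.mem_filter] at hSX
  obtain ⟨hSE, haS, hbS⟩ := hSX
  set T := insert b (S.erase a) with hT
  -- the improved family
  set E' := insert T (E.erase S) with hE'
  have hTcard : T.card = j := by
    rw [hT, Finset.card_insert_of_notMem (fun hc => hbS (Finset.mem_of_mem_erase hc)),
      Finset.card_erase_of_mem haS, hEsizes S hSE]
    have : 1 ≤ S.card := Finset.card_pos.2 ⟨a, haS⟩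
    rw [hEsizes S hSE] at this
    omega
  have hTnotE2 : T ∉ E.erase S := fun hc => hTnotE (Finset.mem_of_mem_erase hc)
  have hE'card : E'.card = Q := by
    rw [hE', Finset.card_insert_of_notMem hTnotE2, Finset.card_erase_of_mem hSE, hEcard]
    have : 1 ≤ Q := by rw [← hEcard]; exact Finset.card_pos.2 ⟨S, hSE⟩
    omega
  have hE'sizes : ∀ U ∈ E', U.card = j := by
    intro U hU
    rcases Finset.mem_insert.1 hU with h | h
    · rw [h]; exact hTcard
    · exact hEsizes U (Finset.mem_of_mem_erase h)
  have hE'𝒮 : E' ∈ 𝒮 := by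
    simp only [𝒮, Finset.mem_filter, Finset.mem_univ, true_and]
    exact ⟨hE'card, hE'sizes⟩
  -- column changes
  have hcol' : ∀ i, col E' i + (if i ∈ S then 1 else 0) = col E i + (if i ∈ T then 1 else 0) := by
    intro i
    have h1 : (E.erase S).filter (fun U => i ∈ U) = (E.filter (fun U => i ∈ U)).erase S :=
      Finset.filter_erase _ _ _
    have h2 : ((E.erase S).filter (fun U => i ∈ U)).card
        = col E i - (if i ∈ S then 1 else 0) := by
      rw [h1]
      show _ = (E.filter (fun S => i ∈ S)).card - _
      by_cases hiS : i ∈ S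
      · rw [Finset.card_erase_of_mem (Finset.mem_filter.2 ⟨hSE, hiS⟩)]
        simp [hiS]
      · rw [Finset.erase_eq_of_notMem
          (show S ∉ E.filter (fun U => i ∈ U) from fun hc => hiS (Finset.mem_filter.1 hc).2)]
        simp [hiS]
    have h3 : (if i ∈ S then 1 else 0 : ℕ) ≤ col E i := by
      by_cases hiS : i ∈ S
      · simp only [hiS, if_true]
        exact Finset.card_pos.2 ⟨S, Finset.mem_filter.2 ⟨hSE, hiS⟩⟩
      · simp [hiS]
    have h4 : col E' i = ((E.erase S).filter (fun U => i ∈ U)).card + (if i ∈ T then 1 else 0) := by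
      rw [hE', hcoldef]
      simp only [Finset.filter_insert]
      by_cases hiT : i ∈ T
      · rw [if_pos hiT, if_pos hiT,
          Finset.card_insert_of_notMem (fun hc => hTnotE2 (Finset.mem_of_mem_filter _ hc))]
      · rw [if_neg hiT, if_neg hiT, Nat.add_zero]
    omega
  -- strict potential decrease
  have haT : a ∉ T := by
    simp only [hT, Finset.mem_insert, Finset.mem_erase]
    push_neg
    exact ⟨hab, fun hc _ => hc rfl⟩
  have hbT : b ∈ T := Finset.mem_insert_self _ _
  have hA : col E' a + 1 = col E a := by
    have h := hcol' a
    rw [if_pos haS, if_neg haT] at h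
    omega
  have hB : col E' b = col E b + 1 := by
    have h := hcol' b
    rw [if_neg hbS, if_pos hbT] at h
    omega
  have hO : ∀ i, i ≠ a → i ≠ b → col E' i = col E i := by
    intro i hia hib
    have h := hcol' i
    have hiff : (i ∈ S) ↔ (i ∈ T) := by
      simp only [hT, Finset.mem_insert, Finset.mem_erase]
      constructor
      · intro hx
        exact Or.inr ⟨hia, hx⟩
      · rintro (hx | ⟨_, hx⟩)
        · exact absurd hx hib
        · exact hx
    by_cases hiS : i ∈ S
    · rw [if_pos hiS, if_pos (hiff.1 hiS)] at h
      omega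
    · rw [if_neg hiS, if_neg (fun hc => hiS (hiff.2 hc))] at h
      omega
  have hdec : Φ E' < Φ E := by
    apply Finset.sum_lt_sum
    · intro i _
      by_cases hia : i = a
      · rw [hia]
        omega
      by_cases hib : i = b
      · rw [hib]
        omega
      · rw [hO i hia hib]
    · refine ⟨a, Finset.mem_univ _, ?_⟩
      omega
  exact absurd (hEmin E' hE'𝒮) (by omega)

-- count of t-subsets of Fin m containing a fixed element
lemma card_layer_mem {m : ℕ} (i : Fin m) (t : ℕ) (ht : 1 ≤ t) :
    (((Finset.univ : Finset (Fin m)).powersetCard t).filter (fun S => i ∈ S)).card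
      = (m-1).choose (t-1) := by
  have hgoal : (((Finset.univ : Finset (Fin m)).erase i).powersetCard (t-1)).card
      = (m-1).choose (t-1) := by
    rw [Finset.card_powersetCard, Finset.card_erase_of_mem (Finset.mem_univ i),
      Finset.card_univ, Fintype.card_fin]
  rw [← hgoal]
  refine Finset.card_bij' (fun S _ => S.erase i) (fun T _ => insert i T) ?_ ?_ ?_ ?_
  · intro S hS
    simp only [Finset.mem_filter, Finset.mem_powersetCard_univ] at hS
    rw [Finset.mem_powersetCard]
    exact ⟨Finset.erase_subset_erase i (Finset.subset_univ S),
      by rw [Finset.card_erase_of_mem hS.2, hS.1]⟩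
  · intro T hT
    rw [Finset.mem_powersetCard] at hT
    have hiT : i ∉ T := fun hc => (Finset.mem_erase.1 (hT.1 hc)).1 rfl
    simp only [Finset.mem_filter, Finset.mem_powersetCard_univ]
    refine ⟨?_, Finset.mem_insert_self _ _⟩
    rw [Finset.card_insert_of_notMem hiT, hT.2]
    omega
  · intro S hS
    simp only [Finset.mem_filter] at hS
    exact Finset.insert_erase hS.2
  · intro T hT
    rw [Finset.mem_powersetCard] at hT
    have hiT : i ∉ T := fun hc => (Finset.mem_erase.1 (hT.1 hc)).1 rfl
    exact Finset.erase_insert hiT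

lemma mem_layers_iff {m k : ℕ} (S : Finset (Fin m)) :
    S ∈ (Finset.Icc 1 k).biUnion (fun t => (Finset.univ : Finset (Fin m)).powersetCard t)
      ↔ 1 ≤ S.card ∧ S.card ≤ k := by
  simp only [Finset.mem_biUnion, Finset.mem_Icc, Finset.mem_powersetCard_univ]
  constructor
  · rintro ⟨t, ⟨h1, h2⟩, rfl⟩
    exact ⟨h1, h2⟩
  · intro h
    exact ⟨S.card, h, rfl⟩

lemma layers_card {m k : ℕ} :
    ((Finset.Icc 1 k).biUnion (fun t => (Finset.univ : Finset (Fin m)).powersetCard t)).card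
      = ∑ t ∈ Finset.Icc 1 k, m.choose t := by
  rw [Finset.card_biUnion]
  · refine Finset.sum_congr rfl fun t _ => ?_
    rw [Finset.card_powersetCard, Finset.card_univ, Fintype.card_fin]
  · intro x _ y _ hxy
    rw [Function.onFun, Finset.disjoint_left]
    intro S hS hS'
    rw [Finset.mem_powersetCard_univ] at hS hS'
    exact hxy (hS ▸ hS')

lemma layers_col {m k : ℕ} (i : Fin m) :
    (((Finset.Icc 1 k).biUnion fun t => (Finset.univ : Finset (Fin m)).powersetCard t).filter
        (fun S => i ∈ S)).card = ∑ t ∈ Finset.Icc 1 k, (m-1).choose (t-1) := by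
  rw [Finset.filter_biUnion, Finset.card_biUnion]
  · refine Finset.sum_congr rfl fun t ht => ?_
    exact card_layer_mem i t (Finset.mem_Icc.1 ht).1
  · intro x _ y _ hxy
    rw [Function.onFun, Finset.disjoint_left]
    intro S hS hS'
    rw [Finset.mem_filter, Finset.mem_powersetCard_univ] at hS hS'
    exact hxy (hS.1 ▸ hS'.1)

-- the balanced hole
lemma exists_balanced_H {m : ℕ} (δ : Fin m → ℕ) (hbal : ∀ a b, δ a ≤ δ b + 1)
    (h : ℕ) (hh : h ≤ m) :
    ∃ H : Finset (Fin m), H.card = h ∧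
      ∀ a b, δ a + (if a ∈ H then 1 else 0) ≤ δ b + (if b ∈ H then 1 else 0) + 1 := by
  rcases Nat.eq_zero_or_pos m with hm | hm
  · refine ⟨∅, by simp; omega, fun a _ => absurd (a.2) (by omega)⟩
  have huniv : (Finset.univ : Finset (Fin m)).Nonempty := by
    rw [Finset.univ_nonempty_iff]
    exact Fin.pos_iff_nonempty.1 hm
  obtain ⟨i0, _, hi0⟩ := Finset.exists_min_image Finset.univ δ huniv
  set b0 := δ i0 with hb0
  have hlo : ∀ i, b0 ≤ δ i := fun i => hi0 i (Finset.mem_univ i)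
  have hhi : ∀ i, δ i ≤ b0 + 1 := fun i => hbal i i0
  set Small := Finset.univ.filter (fun i => δ i = b0) with hSmall
  by_cases hcase : h ≤ Small.card
  · obtain ⟨H, hHsub, hHcard⟩ := Finset.exists_subset_card_eq hcase
    refine ⟨H, hHcard, fun a b => ?_⟩
    have ha : δ a + (if a ∈ H then 1 else 0) ≤ b0 + 1 := by
      by_cases haH : a ∈ H
      · have := (Finset.mem_filter.1 (hHsub haH)).2
        simp [haH, this]
      · rw [if_neg haH]
        have := hhi a
        omega
    have hb : b0 ≤ δ b + (if b ∈ H then 1 else 0) := by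
      have := hlo b; omega
    omega
  · push_neg at hcase
    have hcompl : (Finset.univ \ Small).card = m - Small.card := by
      rw [Finset.card_sdiff_of_subset (Finset.subset_univ _), Finset.card_univ, Fintype.card_fin]
    obtain ⟨K, hKsub, hKcard⟩ := Finset.exists_subset_card_eq
      (show h - Small.card ≤ (Finset.univ \ Small).card by
        rw [hcompl]
        have : Small.card ≤ m := by
          calc Small.card ≤ (Finset.univ : Finset (Fin m)).card := Finset.card_le_card (Finset.filter_subset _ _)
          _ = m := by rw [Finset.card_univ, Fintype.card_fin]
        omega)
    have hdisj : Disjoint Small K := by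
      rw [Finset.disjoint_left]
      intro x hx hx'
      exact (Finset.mem_sdiff.1 (hKsub hx')).2 hx
    refine ⟨Small ∪ K, ?_, fun a b => ?_⟩
    · rw [Finset.card_union_of_disjoint hdisj, hKcard]
      omega
    · have key : ∀ x : Fin m, b0 + 1 ≤ δ x + (if x ∈ Small ∪ K then 1 else 0) ∧
          δ x + (if x ∈ Small ∪ K then 1 else 0) ≤ b0 + 2 := by
        intro x
        by_cases hxS : x ∈ Small
        · have hx : δ x = b0 := (Finset.mem_filter.1 hxS).2
          have : x ∈ Small ∪ K := Finset.mem_union_left _ hxS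
          simp [this, hx]
        · have hx : δ x = b0 + 1 := by
            have h1 := hlo x
            have h2 := hhi x
            have : ¬ δ x = b0 := fun hc => hxS (Finset.mem_filter.2 ⟨Finset.mem_univ x, hc⟩)
            omega
          by_cases hxU : x ∈ Small ∪ K
          · simp [hxU, hx]
          · simp [hxU, hx]
      have h1 := key a
      have h2 := key b
      omega

-- binomial identity
lemma mul_choose_eq {m t : ℕ} (hm : 1 ≤ m) (ht : 1 ≤ t) :
    t * m.choose t = m * (m-1).choose (t-1) := by
  obtain ⟨n, rfl⟩ : ∃ n, m = n + 1 := ⟨m - 1, by omega⟩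
  obtain ⟨s, rfl⟩ : ∃ s, t = s + 1 := ⟨t - 1, by omega⟩
  have h := Nat.add_one_mul_choose_eq n s
  simp only [Nat.add_sub_cancel]
  rw [mul_comm]
  exact h.symm

lemma sum_mul_choose_eq {m k : ℕ} (hm : 1 ≤ m) :
    ∑ i ∈ Finset.Icc 1 k, i * m.choose i = m * ∑ i ∈ Finset.Icc 1 k, (m-1).choose (i-1) := by
  rw [Finset.mul_sum]
  exact Finset.sum_congr rfl fun i hi => mul_choose_eq hm (Finset.mem_Icc.1 hi).1

lemma sum_choose_pred {m : ℕ} (hm : 1 ≤ m) :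
    ∑ i ∈ Finset.Icc 1 m, (m-1).choose (i-1) = 2 ^ (m-1) := by
  rw [show ∑ i ∈ Finset.Icc 1 m, (m-1).choose (i-1)
      = ∑ i ∈ Finset.range m, (m-1).choose i from ?_]
  · rw [show m = (m-1) + 1 by omega]
    simp only [Nat.add_sub_cancel]
    exact Nat.sum_range_choose (m-1)
  · rw [show Finset.Icc 1 m = Finset.Ico 1 (m+1) from (Finset.Ico_add_one_right_eq_Icc 1 m).symm,
      Finset.sum_Ico_eq_sum_range]
    simp

-- card of filtered attach
lemma card_filter_attach {α : Type*} [DecidableEq α] (s : Finset α) (p : α → Prop)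
    [DecidablePred p] :
    ((s.attach).filter (fun x => p x.val)).card = (s.filter p).card := by
  apply Finset.card_bij (fun x _ => x.val)
  · intro x hx
    simp only [Finset.mem_filter] at hx ⊢
    exact ⟨x.2, hx.2⟩
  · intro x _ y _ hxy
    exact Subtype.ext hxy
  · intro y hy
    simp only [Finset.mem_filter] at hy
    exact ⟨⟨y, hy.1⟩, Finset.mem_filter.2 ⟨Finset.mem_attach _ _, hy.2⟩, rfl⟩



/-- Tightness of the arbitrary-routing bound (Proposition IV.2): for every `m ≥ 1`
and balanced path lengths `d_1, …, d_m ≥ 1` with `N = Σ d_i ≤ m·2^(m−1)`, there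
exist a finite node set `V` and monitoring paths `p_i ⊆ V` with `|p_i| = d_i`
whose number of identifiable nodes equals the bound `boundFormula m N`. -/
theorem arbitrary_routing_bound_tight {m : ℕ} (hm : 1 ≤ m) (d : Fin m → ℕ)
    (hd : ∀ i, 1 ≤ d i) (hbal : ∀ i j, d i ≤ d j + 1)
    (hN : ∑ i, d i ≤ m * 2 ^ (m - 1)) :
    ∃ (V : Type) (_ : Fintype V) (instDE : DecidableEq V) (p : Fin m → Finset V),
      (∀ i, (p i).card = d i) ∧
      {v : V | @Identifiable V instDE m p v}.ncard = boundFormula m (∑ i, d i) := by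
  classical
  set N := ∑ i, d i with hNdef
  set k := imax m N with hkdef
  have hmN : m ≤ N := by
    calc m = ∑ _i : Fin m, 1 := by simp
    _ ≤ N := Finset.sum_le_sum fun i _ => hd i
  have hP1 : ∑ i ∈ Finset.Icc 1 1, i * m.choose i ≤ N := by
    simpa [Nat.choose_one_right] using hmN
  have hk1 : 1 ≤ k := Nat.le_findGreatest (P := fun j => ∑ i ∈ Finset.Icc 1 j, i * m.choose i ≤ N) hm hP1
  have hkm : k ≤ m := Nat.findGreatest_le (P := fun j => ∑ i ∈ Finset.Icc 1 j, i * m.choose i ≤ N) m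
  have hSk : ∑ i ∈ Finset.Icc 1 k, i * m.choose i ≤ N := Nat.findGreatest_spec (P := fun j => ∑ i ∈ Finset.Icc 1 j, i * m.choose i ≤ N) hm hP1
  set c := ∑ i ∈ Finset.Icc 1 k, (m-1).choose (i-1) with hcdef
  have hmc : ∑ i ∈ Finset.Icc 1 k, i * m.choose i = m * c := sum_mul_choose_eq hm
  have hmcN : m * c ≤ N := by rw [← hmc]; exact hSk
  have hc1 : 1 ≤ c := by
    have h1 : (1:ℕ) ∈ Finset.Icc 1 k := Finset.mem_Icc.2 ⟨le_refl 1, hk1⟩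
    calc 1 = (m-1).choose (1-1) := by simp
    _ ≤ c := by
      rw [hcdef]
      exact Finset.single_le_sum (f := fun i => (m-1).choose (i-1)) (fun i _ => Nat.zero_le _) h1
  have hcd : ∀ i, c ≤ d i := by
    intro i
    by_contra hlt
    push_neg at hlt
    have hall : ∀ j, d j ≤ c := fun j => by have := hbal j i; omega
    have hNlt : N < m * c := by
      calc N = ∑ j, d j := hNdef
      _ < ∑ _j : Fin m, c := Finset.sum_lt_sum (fun j _ => hall j) ⟨i, Finset.mem_univ i, hlt⟩
      _ = m * c := by simp [mul_comm]
    omega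
  set R := N - m * c with hRdef
  have hRN : m * c + R = N := by omega
  set q := R / (k+1) with hqdef
  set r := R % (k+1) with hrdef
  have hqr : q * (k+1) + r = R := by rw [hqdef, hrdef, mul_comm]; exact Nat.div_add_mod R (k+1)
  have hrk : r < k + 1 := Nat.mod_lt _ (by omega)
  set δ := fun i => d i - c with hδdef
  have hδi : ∀ i, δ i = d i - c := fun i => rfl
  have hδsum : ∑ i, δ i = R := by
    have h1 : ∑ i, (δ i + c) = ∑ i, d i := Finset.sum_congr rfl fun i _ => by
      rw [hδi i]
      have := hcd i
      omega
    rw [Finset.sum_add_distrib, Finset.sum_const, Finset.card_univ, Fintype.card_fin,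
      smul_eq_mul] at h1
    omega
  have hδbal : ∀ a b, δ a ≤ δ b + 1 := by
    intro a b
    have h1 := hbal a b
    have h2 := hcd a
    have h3 := hcd b
    rw [hδi a, hδi b]
    omega
  set h0 := if r = 0 then 0 else k + 1 - r with hh0def
  have hh0m : h0 ≤ m := by rw [hh0def]; split <;> omega
  obtain ⟨H, hHcard, hHbal⟩ := exists_balanced_H δ hδbal h0 hh0m
  set Q := if r = 0 then q else q + 1 with hQdef
  set γ := fun i => δ i + (if i ∈ H then 1 else 0) with hγdef
  have hγi : ∀ i, γ i = δ i + (if i ∈ H then 1 else 0) := fun i => rfl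
  have hHsum : (∑ i, if i ∈ H then (1:ℕ) else 0) = h0 := by
    rw [Finset.sum_ite_mem, Finset.univ_inter, Finset.sum_const, smul_eq_mul, mul_one, hHcard]
  have hγsum : ∑ i, γ i = Q * (k+1) := by
    have h1 : ∑ i, γ i = R + h0 := by
      calc ∑ i, γ i = ∑ i, (δ i + if i ∈ H then 1 else 0) := Finset.sum_congr rfl fun i _ => hγi i
      _ = (∑ i, δ i) + ∑ i, (if i ∈ H then (1:ℕ) else 0) := Finset.sum_add_distrib
      _ = R + h0 := by rw [hδsum, hHsum]
    rw [h1, hQdef, hh0def]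
    rcases Nat.eq_zero_or_pos r with hr | hr
    · rw [if_pos hr, if_pos hr]
      omega
    · rw [if_neg (by omega), if_neg (by omega)]
      have hexp : (q+1) * (k+1) = q * (k+1) + (k+1) := by ring
      omega
  have hγbal : ∀ a b, γ a ≤ γ b + 1 := fun a b => hHbal a b
  have hQC : Q ≤ m.choose (k+1) := by
    rcases Nat.lt_or_ge k m with hklt | hke
    · have hgt : ¬ (∑ i ∈ Finset.Icc 1 (k+1), i * m.choose i ≤ N) :=
        Nat.findGreatest_is_greatest (P := fun j => ∑ i ∈ Finset.Icc 1 j, i * m.choose i ≤ N) (Nat.lt_succ_self k) hklt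
      push_neg at hgt
      rw [Finset.sum_Icc_succ_top (by omega)] at hgt
      have hRlt : R < (k+1) * m.choose (k+1) := by omega
      have hq : q < m.choose (k+1) := by
        rw [hqdef]
        rw [Nat.div_lt_iff_lt_mul (by omega : 0 < k+1)]
        rw [mul_comm] at hRlt
        exact hRlt
      rw [hQdef]
      split <;> omega
    · have hkm' : k = m := le_antisymm hkm hke
      have hcm : c = 2^(m-1) := by rw [hcdef, hkm']; exact sum_choose_pred hm
      have hR0 : R = 0 := by
        have hNle : N ≤ m * c := by rw [hcm]; exact hN
        omega
      have hq0 : q = 0 := by rw [hqdef, hR0]; simp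
      have hr0 : r = 0 := by rw [hrdef, hR0]; simp
      rw [hQdef, if_pos hr0, hq0]
      exact Nat.zero_le _
  obtain ⟨E, hEcard, hEsizes, hEcol⟩ := exists_uniform_family m (k+1) Q γ hQC hγsum hγbal
  set Layers := (Finset.Icc 1 k).biUnion
    (fun t => (Finset.univ : Finset (Fin m)).powersetCard t) with hLdef
  set G := (Layers.erase H) ∪ E with hGdef
  have hEnotL : ∀ S ∈ E, S ∉ Layers := by
    intro S hS hc
    rw [hLdef, mem_layers_iff] at hc
    have := hEsizes S hS
    omega
  have hdisj : Disjoint (Layers.erase H) E := by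
    rw [Finset.disjoint_right]
    intro S hS hc
    exact hEnotL S hS (Finset.mem_of_mem_erase hc)
  have hHL : r ≠ 0 → H ∈ Layers := by
    intro hr
    rw [hLdef, mem_layers_iff, hHcard, hh0def, if_neg hr]
    omega
  have hHnL : r = 0 → Layers.erase H = Layers := by
    intro hr
    apply Finset.erase_eq_of_notMem
    rw [hLdef, mem_layers_iff, hHcard, hh0def, if_pos hr]
    omega
  have hLcard : Layers.card = ∑ t ∈ Finset.Icc 1 k, m.choose t := by
    rw [hLdef]; exact layers_card
  have hLcol : ∀ i : Fin m, (Layers.filter (fun S => i ∈ S)).card = c := by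
    intro i
    rw [hLdef, layers_col i, hcdef]
  have hbase1 : 1 ≤ ∑ t ∈ Finset.Icc 1 k, m.choose t := by
    have h1 : (1:ℕ) ∈ Finset.Icc 1 k := Finset.mem_Icc.2 ⟨le_refl 1, hk1⟩
    calc 1 ≤ m.choose 1 := by rw [Nat.choose_one_right]; omega
    _ ≤ ∑ t ∈ Finset.Icc 1 k, m.choose t :=
      Finset.single_le_sum (f := fun t => m.choose t) (fun i _ => Nat.zero_le _) h1
  have hGcard : G.card = (∑ t ∈ Finset.Icc 1 k, m.choose t) + q := by
    rw [hGdef, Finset.card_union_of_disjoint hdisj, hEcard]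
    rcases Nat.eq_zero_or_pos r with hr | hr
    · rw [hHnL hr, hLcard, hQdef, if_pos hr]
    · rw [Finset.card_erase_of_mem (hHL (by omega)), hLcard, hQdef, if_neg (by omega)]
      omega
  have hGcol : ∀ i : Fin m, (G.filter (fun S => i ∈ S)).card = d i := by
    intro i
    rw [hGdef, Finset.filter_union,
      Finset.card_union_of_disjoint
        (hdisj.mono (Finset.filter_subset _ _) (Finset.filter_subset _ _)),
      Finset.filter_erase, hEcol i, hγi i]
    by_cases hiH : i ∈ H
    · have hr : r ≠ 0 := by
        intro hr0
        rw [hh0def, if_pos hr0] at hHcard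
        rw [Finset.card_eq_zero] at hHcard
        rw [hHcard] at hiH
        exact absurd hiH (Finset.notMem_empty i)
      have hHf : H ∈ Layers.filter (fun S => i ∈ S) :=
        Finset.mem_filter.2 ⟨hHL hr, hiH⟩
      rw [Finset.card_erase_of_mem hHf, hLcol i, if_pos hiH, hδi i]
      have := hcd i
      omega
    · rw [Finset.erase_eq_of_notMem
        (show H ∉ Layers.filter (fun S => i ∈ S) from fun hc => hiH (Finset.mem_filter.1 hc).2),
        hLcol i, if_neg hiH, hδi i]
      have := hcd i
      omega
  have hGne : ∀ S ∈ G, S ≠ ∅ := by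
    intro S hS
    rw [hGdef, Finset.mem_union] at hS
    rw [← Finset.nonempty_iff_ne_empty, ← Finset.card_pos]
    rcases hS with hS | hS
    · have := (mem_layers_iff S).1 (by rw [← hLdef]; exact Finset.mem_of_mem_erase hS)
      omega
    · have := hEsizes S hS
      omega
  -- construct the node set
  refine ⟨{S : Finset (Fin m) // S ∈ G}, FinsetCoe.fintype G, inferInstance,
    fun i => Finset.univ.filter (fun v => i ∈ v.1), ?_, ?_⟩
  · intro i
    rw [Finset.univ_eq_attach, card_filter_attach G (fun S => i ∈ S)]
    exact hGcol i
  · have henc : ∀ v : {S : Finset (Fin m) // S ∈ G},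
        encoding (fun i => Finset.univ.filter (fun w : {S : Finset (Fin m) // S ∈ G} => i ∈ w.1)) v
          = v.1 := by
      intro v
      ext i
      simp [encoding]
    have hall : ∀ v : {S : Finset (Fin m) // S ∈ G},
        Identifiable (fun i => Finset.univ.filter (fun w : {S : Finset (Fin m) // S ∈ G} => i ∈ w.1)) v := by
      intro v
      constructor
      · rw [henc v]
        exact hGne v.1 v.2
      · intro w hw hc
        rw [henc w, henc v] at hc
        exact hw (Subtype.ext hc)
    have hset : {v : {S : Finset (Fin m) // S ∈ G} |
        Identifiable (fun i => Finset.univ.filter (fun w : {S : Finset (Fin m) // S ∈ G} => i ∈ w.1)) v}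
          = Set.univ := Set.eq_univ_of_forall hall
    rw [hset, Set.ncard_univ, Nat.card_eq_fintype_card, Fintype.card_coe, hGcard]
    have hbound : boundFormula m N = (∑ t ∈ Finset.Icc 1 k, m.choose t) + q := by
      unfold boundFormula
      rw [← hkdef, hmc, ← hRdef, ← hqdef]
    rw [hbound]
end

section
/- Under consistent routing, every column of every path matrix has consecutive ones: for any two paths p_i and p_j of a consistent set of paths, and for any positions a ≤ h ≤ b on p_i, if the nodes in positions a and b of p_i both appear on p_j, then the node in position h of p_i also appears on p_j. -/
/-- The contiguous segment of the list `l` between (the first occurrences of) the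
nodes `u` and `w`, inclusive, taken in the order of `l`. -/
def seg {V : Type*} [DecidableEq V] (l : List V) (u w : V) : List V :=
  (l.drop (min (l.idxOf u) (l.idxOf w))).take
    (max (l.idxOf u) (l.idxOf w) - min (l.idxOf u) (l.idxOf w) + 1)

/-- Two paths are consistent if, for any two nodes `u, w` appearing on both, the
contiguous segment of one between `u` and `w` equals, up to reversal, the
contiguous segment of the other between `u` and `w`. -/
def ConsistentPair {V : Type*} [DecidableEq V] (l l' : List V) : Prop :=
  ∀ u w : V, u ∈ l → w ∈ l → u ∈ l' → w ∈ l' →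
    seg l u w = seg l' u w ∨ seg l u w = (seg l' u w).reverse

/-- A family of paths is consistent if every two of its paths are consistent. -/
def Consistent {V : Type*} [DecidableEq V] {ι : Type*} (p : ι → List V) : Prop :=
  ∀ i j, ConsistentPair (p i) (p j)

/-- Consecutive-ones property (Lemma IV.6): under consistent routing, for any two
paths `p i`, `p j` and positions `a ≤ h ≤ c` on `p i`, if the nodes at positions
`a` and `c` of `p i` both appear on `p j`, then so does the node at position `h`. -/
theorem consecutive_ones {V : Type*} [DecidableEq V] {m : ℕ} (p : Fin m → List V)
    (hnodup : ∀ i, (p i).Nodup) (hcons : Consistent p)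
    (i j : Fin m) (a h c : ℕ) (hc : c < (p i).length) (hah : a ≤ h) (hhc : h ≤ c)
    (ha : (p i).get ⟨a, lt_of_le_of_lt (hah.trans hhc) hc⟩ ∈ p j)
    (hb : (p i).get ⟨c, hc⟩ ∈ p j) :
    (p i).get ⟨h, lt_of_le_of_lt hhc hc⟩ ∈ p j := by
  set l := p i with hl
  have hal : a < l.length := lt_of_le_of_lt (hah.trans hhc) hc
  have hhl : h < l.length := lt_of_le_of_lt hhc hc
  set u := l.get ⟨a, hal⟩ with hu
  set w := l.get ⟨c, hc⟩ with hw
  have hiu : l.idxOf u = a := List.Nodup.idxOf_getElem (hnodup i) a hal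
  have hiw : l.idxOf w = c := List.Nodup.idxOf_getElem (hnodup i) c hc
  have hmem : l.get ⟨h, hhl⟩ ∈ seg l u w := by
    unfold seg
    rw [hiu, hiw, min_eq_left (hah.trans hhc), max_eq_right (hah.trans hhc)]
    have h1 : h - a < c - a + 1 := by omega
    have h2 : h - a < (l.drop a).length := by
      rw [List.length_drop]; omega
    have : (l.drop a)[h - a] = l.get ⟨h, hhl⟩ := by
      rw [List.getElem_drop]
      simp only [List.get_eq_getElem]
      congr 1
      omega
    rw [← this]
    exact List.mem_take_iff_getElem.mpr ⟨h - a, by omega, by simp⟩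
  have hsub : ∀ x, x ∈ seg (p j) u w → x ∈ p j := by
    intro x hx
    unfold seg at hx
    exact List.mem_of_mem_drop (List.mem_of_mem_take hx)
  rcases hcons i j u w (List.get_mem _ _) (List.get_mem _ _) ha hb with heq | heq
  · exact hsub _ (heq ▸ hmem)
  · rw [heq, List.mem_reverse] at hmem
    exact hsub _ hmem
end

section
/- Let P = (p_1, …, p_m) be a consistent set of monitoring paths all having the same final node r (a common endpoint). Then the simple graph whose vertex set is the set of nodes appearing on at least one path, and in which two nodes are adjacent if and only if they occur in consecutive positions on some path p_i, is a tree (connected and acyclic) containing r. -/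
set_option linter.unusedSectionVars false


/-- The simple graph whose vertices are the nodes appearing on at least one of the
paths, two nodes being adjacent iff they occur in consecutive positions on some
path. -/
def pathGraph {V : Type*} {m : ℕ} (p : Fin m → List V) :
    SimpleGraph {v : V // ∃ i, v ∈ p i} where
  Adj x y := x ≠ y ∧ ∃ i, [x.1, y.1] <:+: p i ∨ [y.1, x.1] <:+: p i
  symm := by
    constructor
    rintro x y ⟨hxy, i, h⟩
    exact ⟨hxy.symm, i, h.symm⟩
  loopless := by
    constructor
    rintro x ⟨hx, -⟩
    exact hx rfl

section Aux

variable {V : Type*} [DecidableEq V]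

lemma getLast?_mem {l : List V} {r : V} (hl : l.getLast? = some r) : r ∈ l := by
  have hne : l ≠ [] := by rintro rfl; simp at hl
  rw [List.getLast?_eq_getLast hne, Option.some_inj] at hl
  exact hl ▸ List.getLast_mem hne

lemma indexOf_last {l : List V} {r : V} (hn : l.Nodup) (hl : l.getLast? = some r) :
    l.idxOf r = l.length - 1 := by
  have hne : l ≠ [] := by rintro rfl; simp at hl
  rw [List.getLast?_eq_getLast hne, Option.some_inj] at hl
  rw [← hl, List.getLast_eq_getElem hne, List.Nodup.idxOf_getElem hn]

lemma drop_getLast? {l : List V} {r : V} (hl : l.getLast? = some r) {k : ℕ}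
    (hk : k < l.length) : (l.drop k).getLast? = some r := by
  have hne : l.drop k ≠ [] := by
    intro h
    have := congrArg List.length h
    simp at this; omega
  conv at hl => rw [← List.take_append_drop k l]
  rw [List.getLast?_append, List.getLast?_eq_getLast hne] at hl
  rw [List.getLast?_eq_getLast hne]
  simpa using hl

lemma drop_head? {l : List V} {v : V} (hv : v ∈ l) :
    (l.drop (l.idxOf v)).head? = some v := by
  have hk : l.idxOf v < l.length := List.idxOf_lt_length_iff.mpr hv
  rw [List.head?_drop, List.getElem?_eq_getElem hk, List.getElem_idxOf]

lemma seg_last_eq_drop {l : List V} {r v : V} (hn : l.Nodup)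
    (hl : l.getLast? = some r) (hv : v ∈ l) :
    seg l v r = l.drop (l.idxOf v) := by
  have hk : l.idxOf v < l.length := List.idxOf_lt_length_iff.mpr hv
  have hr : l.idxOf r = l.length - 1 := indexOf_last hn hl
  rw [seg, hr, min_eq_left (by omega), max_eq_right (by omega)]
  exact List.take_of_length_le (by rw [List.length_drop]; omega)

lemma drop_indexOf_last {l : List V} {r : V} (hn : l.Nodup)
    (hl : l.getLast? = some r) : l.drop (l.idxOf r) = [r] := by
  have hne : l ≠ [] := by rintro rfl; simp at hl
  have h1 : 0 < l.length := List.length_pos_iff.mpr hne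
  have hr : l.idxOf r = l.length - 1 := indexOf_last hn hl
  have hlen : (l.drop (l.idxOf r)).length = 1 := by rw [List.length_drop]; omega
  obtain ⟨a, ha⟩ := List.length_eq_one_iff.mp hlen
  have := drop_getLast? hl (k := l.idxOf r) (by omega)
  rw [ha] at this ⊢
  simpa using this

variable {m : ℕ} {p : Fin m → List V} {r : V}

lemma drop_indexOf_consistent (hnodup : ∀ i, (p i).Nodup) (hcons : Consistent p)
    (hlast : ∀ i, (p i).getLast? = some r) {v : V} {i j : Fin m}
    (hi : v ∈ p i) (hj : v ∈ p j) :
    (p i).drop ((p i).idxOf v) = (p j).drop ((p j).idxOf v) := by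
  have hri : r ∈ p i := getLast?_mem (hlast i)
  have hrj : r ∈ p j := getLast?_mem (hlast j)
  have h := hcons i j v r hi hri hj hrj
  rw [seg_last_eq_drop (hnodup i) (hlast i) hi,
    seg_last_eq_drop (hnodup j) (hlast j) hj] at h
  rcases h with h | h
  · exact h
  · have h1 : ((p i).drop ((p i).idxOf v)).head? = some v := drop_head? hi
    have h2 : ((p j).drop ((p j).idxOf v)).getLast? = some r :=
      drop_getLast? (hlast j) (List.idxOf_lt_length_iff.mpr hj)
    rw [h, List.head?_reverse, h2, Option.some_inj] at h1
    subst h1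
    rw [drop_indexOf_last (hnodup i) (hlast i),
      drop_indexOf_last (hnodup j) (hlast j)]

/-- The tail of (any) path from `v` on to the end. -/
noncomputable def tl (p : Fin m → List V) (v : {v : V // ∃ i, v ∈ p i}) : List V :=
  (p v.2.choose).drop ((p v.2.choose).idxOf v.1)

lemma tl_spec (hnodup : ∀ i, (p i).Nodup) (hcons : Consistent p)
    (hlast : ∀ i, (p i).getLast? = some r) (v : {v : V // ∃ i, v ∈ p i})
    {i : Fin m} (hi : v.1 ∈ p i) :
    tl p v = (p i).drop ((p i).idxOf v.1) :=
  drop_indexOf_consistent hnodup hcons hlast v.2.choose_spec hi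

lemma tl_head? (v : {v : V // ∃ i, v ∈ p i}) : (tl p v).head? = some v.1 :=
  drop_head? v.2.choose_spec

lemma tl_ne_nil (v : {v : V // ∃ i, v ∈ p i}) : tl p v ≠ [] := by
  intro h
  have := tl_head? (p := p) v
  rw [h] at this
  simp at this

lemma tl_length_pos (v : {v : V // ∃ i, v ∈ p i}) : 0 < (tl p v).length :=
  List.length_pos_iff.mpr (tl_ne_nil v)

lemma tl_getLast? (hlast : ∀ i, (p i).getLast? = some r)
    (v : {v : V // ∃ i, v ∈ p i}) : (tl p v).getLast? = some r :=
  drop_getLast? (hlast v.2.choose) (List.idxOf_lt_length_iff.mpr v.2.choose_spec)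

lemma tl_nodup (hnodup : ∀ i, (p i).Nodup) (v : {v : V // ∃ i, v ∈ p i}) :
    (tl p v).Nodup :=
  (List.drop_suffix _ _).sublist.nodup (hnodup v.2.choose)

lemma eq_root_of_tl_length_one (hlast : ∀ i, (p i).getLast? = some r)
    (v : {v : V // ∃ i, v ∈ p i}) (h : (tl p v).length = 1) : v.1 = r := by
  obtain ⟨a, ha⟩ := List.length_eq_one_iff.mp h
  have h1 := tl_head? (p := p) v
  have h2 := tl_getLast? hlast v
  rw [ha] at h1 h2
  simp at h1 h2
  rw [← h1, h2]

/-- The parent of a vertex: the next node towards the root. -/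
noncomputable def pa (p : Fin m → List V) (v : {v : V // ∃ i, v ∈ p i}) :
    {v : V // ∃ i, v ∈ p i} :=
  if h : 2 ≤ (tl p v).length then
    ⟨(tl p v)[1]'(by omega), v.2.choose, by
      have h1 : (tl p v)[1]'(by omega) ∈ tl p v := List.getElem_mem (by omega)
      have h2 : tl p v <:+ p v.2.choose := List.drop_suffix _ _
      exact h2.subset h1⟩
  else v

lemma pa_val (v : {v : V // ∃ i, v ∈ p i}) (h : 2 ≤ (tl p v).length) :
    (pa p v).1 = (tl p v)[1]'(by omega) := by
  rw [pa, dif_pos h]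

lemma tl_shape (v : {v : V // ∃ i, v ∈ p i}) (h : 2 ≤ (tl p v).length) :
    ∃ t, tl p v = v.1 :: (pa p v).1 :: t := by
  obtain ⟨a, t0, h0⟩ := List.exists_cons_of_ne_nil (tl_ne_nil (p := p) v)
  have ht0 : t0 ≠ [] := by
    intro hx
    have := congrArg List.length h0
    rw [hx] at this; simp at this; omega
  obtain ⟨b, t, h1⟩ := List.exists_cons_of_ne_nil ht0
  rw [h1] at h0
  have ha : a = v.1 := by
    have := tl_head? (p := p) v
    rw [h0] at this; simpa using this
  have hb : (tl p v)[1]'(by omega) = b := by simp [h0]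
  refine ⟨t, ?_⟩
  rw [pa_val v h, hb, h0, ha]

lemma pa_spec (hnodup : ∀ i, (p i).Nodup) (hcons : Consistent p)
    (hlast : ∀ i, (p i).getLast? = some r) (v : {v : V // ∃ i, v ∈ p i})
    (h : 2 ≤ (tl p v).length) :
    (pathGraph p).Adj v (pa p v) ∧ tl p (pa p v) = (tl p v).tail := by
  obtain ⟨t, hshape⟩ := tl_shape v h
  have hsuf : tl p v <:+ p v.2.choose := List.drop_suffix _ _
  obtain ⟨s, hs⟩ := hsuf
  rw [hshape] at hs
  -- nodup facts
  have hn : (s ++ (v.1 :: (pa p v).1 :: t)).Nodup := by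
    rw [hs]; exact hnodup v.2.choose
  rw [List.nodup_append'] at hn
  have hvw : v.1 ≠ (pa p v).1 := by
    have := hn.2.1
    rw [List.nodup_cons] at this
    intro hx
    exact this.1 (by rw [hx]; simp)
  have hwns : (pa p v).1 ∉ s := fun hmem => hn.2.2 hmem (by simp)
  -- index of parent
  have hwidx : (p v.2.choose).idxOf (pa p v).1 = s.length + 1 := by
    rw [← hs, List.idxOf_append_of_notMem hwns, List.idxOf_cons_ne _ hvw,
      List.idxOf_cons_self]
  have hwmem : (pa p v).1 ∈ p v.2.choose := by
    rw [← hs]; simp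
  have htlpa : tl p (pa p v) = (tl p v).tail := by
    rw [tl_spec hnodup hcons hlast (pa p v) hwmem, hwidx, hshape]
    have : s ++ (v.1 :: (pa p v).1 :: t) = (s ++ [v.1]) ++ ((pa p v).1 :: t) := by simp
    rw [← hs, this]
    have hlen : s.length + 1 = (s ++ [v.1]).length := by simp
    rw [hlen, List.drop_left]
    rfl
  refine ⟨⟨fun he => hvw (by rw [← he]), v.2.choose, Or.inl ⟨s, t, by rw [← hs]; simp⟩⟩, htlpa⟩

lemma infix_pa (hnodup : ∀ i, (p i).Nodup) (hcons : Consistent p)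
    (hlast : ∀ i, (p i).getLast? = some r) {x y : {v : V // ∃ i, v ∈ p i}}
    {i : Fin m} (hinf : [x.1, y.1] <:+: p i) :
    2 ≤ (tl p x).length ∧ y = pa p x := by
  obtain ⟨s, t, hst⟩ := hinf
  have hx : x.1 ∈ p i := by rw [← hst]; simp
  have hn : (s ++ ([x.1, y.1] ++ t)).Nodup := by
    rw [← List.append_assoc, hst]; exact hnodup i
  rw [List.nodup_append'] at hn
  have hnx : x.1 ∉ s := fun hmem => hn.2.2 hmem (by simp)
  have hidx : (p i).idxOf x.1 = s.length := by
    rw [← hst, List.append_assoc, List.idxOf_append_of_notMem hnx]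
    simp
  have htl : tl p x = x.1 :: y.1 :: t := by
    rw [tl_spec hnodup hcons hlast x hx, hidx, ← hst, List.append_assoc,
      List.drop_left]
    rfl
  have h2 : 2 ≤ (tl p x).length := by simp [htl]
  refine ⟨h2, ?_⟩
  apply Subtype.ext
  rw [pa_val x h2]
  simp [htl]

lemma adj_pa (hnodup : ∀ i, (p i).Nodup) (hcons : Consistent p)
    (hlast : ∀ i, (p i).getLast? = some r) {x y : {v : V // ∃ i, v ∈ p i}}
    (hadj : (pathGraph p).Adj x y) :
    (2 ≤ (tl p x).length ∧ y = pa p x) ∨ (2 ≤ (tl p y).length ∧ x = pa p y) := by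
  obtain ⟨hne, i, h | h⟩ := hadj
  · exact Or.inl (infix_pa hnodup hcons hlast h)
  · exact Or.inr (infix_pa hnodup hcons hlast h)

lemma no_max_cycle (hnodup : ∀ i, (p i).Nodup) (hcons : Consistent p)
    (hlast : ∀ i, (p i).getLast? = some r) (v : {v : V // ∃ i, v ∈ p i})
    (c : (pathGraph p).Walk v v) (hc : c.IsCycle)
    (hmax : ∀ w ∈ c.support, (tl p w).length ≤ (tl p v).length) : False := by
  cases c with
  | nil => simpa using hc.three_le_length
  | @cons _ x _ h q =>
    obtain ⟨y, h', q'', hq⟩ := SimpleGraph.Walk.exists_eq_cons_of_ne h.ne q.reverse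
    have hqe : q.edges = q''.edges.reverse ++ [s(v, y)] := by
      have h1 : q.reverse.edges = s(v, y) :: q''.edges := by
        rw [hq, SimpleGraph.Walk.edges_cons]
      have h2 : q.edges.reverse = s(v, y) :: q''.edges := by
        rw [← SimpleGraph.Walk.edges_reverse, h1]
      calc q.edges = q.edges.reverse.reverse := by simp
        _ = (s(v, y) :: q''.edges).reverse := by rw [h2]
        _ = q''.edges.reverse ++ [s(v, y)] := by simp
    have hxy : x ≠ y := by
      intro he
      subst he
      have hnd := hc.isTrail.edges_nodup
      rw [SimpleGraph.Walk.edges_cons, hqe, List.nodup_cons] at hnd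
      exact hnd.1 (by simp)
    have hx_sup : x ∈ (SimpleGraph.Walk.cons h q).support := by
      rw [SimpleGraph.Walk.support_cons]
      exact List.mem_cons_of_mem _ q.start_mem_support
    have hy_sup : y ∈ (SimpleGraph.Walk.cons h q).support := by
      have h1 : y ∈ q.reverse.support := by
        rw [hq, SimpleGraph.Walk.support_cons]
        exact List.mem_cons_of_mem _ q''.start_mem_support
      rw [SimpleGraph.Walk.support_reverse, List.mem_reverse] at h1
      rw [SimpleGraph.Walk.support_cons]
      exact List.mem_cons_of_mem _ h1
    have hxlen := hmax x hx_sup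
    have hylen := hmax y hy_sup
    have key : ∀ z : {v : V // ∃ i, v ∈ p i}, (pathGraph p).Adj v z →
        (tl p z).length ≤ (tl p v).length → z = pa p v := by
      intro z hadj hzlen
      rcases adj_pa hnodup hcons hlast hadj with ⟨_, hz⟩ | ⟨h2z, hvpa⟩
      · exact hz
      · exfalso
        have hts := (pa_spec hnodup hcons hlast z h2z).2
        rw [← hvpa] at hts
        have hlen := congrArg List.length hts
        rw [List.length_tail] at hlen
        omega
    exact hxy ((key x h hxlen).trans (key y h' hylen).symm)

lemma pathGraph_isAcyclic (hnodup : ∀ i, (p i).Nodup) (hcons : Consistent p)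
    (hlast : ∀ i, (p i).getLast? = some r) : (pathGraph p).IsAcyclic := by
  intro u c hc
  have hune : u ∈ c.support := c.start_mem_support
  obtain ⟨v, hvmem, hvmax⟩ := c.support.toFinset.exists_max_image
    (fun w => (tl p w).length) ⟨u, List.mem_toFinset.mpr hune⟩
  rw [List.mem_toFinset] at hvmem
  have hcyc := hc.rotate hvmem
  have hsup : ∀ w ∈ (c.rotate v hvmem).support, (tl p w).length ≤ (tl p v).length := by
    intro w hw
    rw [SimpleGraph.Walk.support_eq_cons, List.mem_cons] at hw
    rcases hw with rfl | hw
    · exact le_rfl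
    · have h1 : w ∈ c.support.tail :=
        (SimpleGraph.Walk.support_rotate c v hvmem).mem_iff.mp hw
      exact hvmax w (List.mem_toFinset.mpr (List.mem_of_mem_tail h1))
  exact no_max_cycle hnodup hcons hlast v (c.rotate v hvmem) hcyc hsup

end Aux

/-- Lemma V.1: consistent monitoring paths sharing a common final endpoint `r` span
a tree containing `r`. -/
theorem pathGraph_isTree {V : Type*} [DecidableEq V] {m : ℕ} (hm : 0 < m)
    (p : Fin m → List V) (r : V) (hnodup : ∀ i, (p i).Nodup)
    (hcons : Consistent p) (hlast : ∀ i, (p i).getLast? = some r) :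
    (∃ i, r ∈ p i) ∧ (pathGraph p).IsTree := by
  have hr0 : r ∈ p ⟨0, hm⟩ := getLast?_mem (hlast ⟨0, hm⟩)
  refine ⟨⟨⟨0, hm⟩, hr0⟩, ?_, pathGraph_isAcyclic hnodup hcons hlast⟩
  -- connectivity
  set vr : {v : V // ∃ i, v ∈ p i} := ⟨r, ⟨0, hm⟩, hr0⟩ with hvr
  have conn : ∀ n (v : {v : V // ∃ i, v ∈ p i}), (tl p v).length ≤ n →
      (pathGraph p).Reachable v vr := by
    intro n
    induction n with
    | zero =>
      intro v hv
      have := tl_length_pos (p := p) v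
      omega
    | succ n ih =>
      intro v hv
      by_cases h2 : 2 ≤ (tl p v).length
      · obtain ⟨hadj, htl⟩ := pa_spec hnodup hcons hlast v h2
        have hlen : (tl p (pa p v)).length ≤ n := by
          rw [htl, List.length_tail]; omega
        exact hadj.reachable.trans (ih _ hlen)
      · have h1 : (tl p v).length = 1 := by
          have := tl_length_pos (p := p) v
          omega
        have : v = vr := Subtype.ext (eq_root_of_tl_length_one hlast v h1)
        rw [this]
  have : Nonempty {v : V // ∃ i, v ∈ p i} := ⟨vr⟩
  exact SimpleGraph.Connected.mk
    (fun a b => (conn _ a le_rfl).trans ((conn _ b le_rfl).symm))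
end
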